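/- Let A, B, C be three non-collinear points of the Euclidean plane, and set a = dist(B, C), b = dist(C, A), c = dist(A, B). Assume a ≠ c. Define J_A = (b/(b+c)) • B + (c/(b+c)) • C (the point where the internal bisector of the angle at A meets line BC), J_B = (a/(a−c)) • A − (c/(a−c)) • C (the point where the external bisector of the angle at B meets line CA), and J_C = (a/(a+b)) • A + (b/(a+b)) • B (the point where the internal bisector of the angle at C meets line AB). Then J_A, J_B, J_C are collinear. -/
import Mathlib


/-- Euclidean Angle-Bisector Collinearity Theorem: for a nondegenerate triangle
`A B C` with side lengths `a = |BC|`, `b = |CA|`, `c = |AB|` and `a ≠ c`, the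
point `J_A` where the internal bisector at `A` meets `BC`, the point `J_B` where
the external bisector at `B` meets line `CA`, and the point `J_C` where the
internal bisector at `C` meets `AB` are collinear. -/
theorem angle_bisector_collinearity (A B C : EuclideanSpace ℝ (Fin 2))
    (hnc : ¬ Collinear ℝ ({A, B, C} : Set (EuclideanSpace ℝ (Fin 2))))
    (a b c : ℝ) (ha : a = dist B C) (hb : b = dist C A) (hc : c = dist A B)
    (hac : a ≠ c) :
    Collinear ℝ ({(b / (b + c)) • B + (c / (b + c)) • C,
                  (a / (a - c)) • A - (c / (a - c)) • C,
                  (a / (a + b)) • A + (b / (a + b)) • B} :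
        Set (EuclideanSpace ℝ (Fin 2))) := by
  have hAB : A ≠ B := by
    rintro rfl
    exact hnc ((collinear_pair ℝ A C).subset (by intro x hx; simp only [Set.mem_insert_iff, Set.mem_singleton_iff] at hx ⊢; tauto))
  have hBC : B ≠ C := by
    rintro rfl
    exact hnc ((collinear_pair ℝ A B).subset (by intro x hx; simp only [Set.mem_insert_iff, Set.mem_singleton_iff] at hx ⊢; tauto))
  have hCA : C ≠ A := by
    rintro rfl
    exact hnc ((collinear_pair ℝ C B).subset (by intro x hx; simp only [Set.mem_insert_iff, Set.mem_singleton_iff] at hx ⊢; tauto))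
  have ha0 : 0 < a := by rw [ha]; exact dist_pos.2 hBC
  have hb0 : 0 < b := by rw [hb]; exact dist_pos.2 hCA
  have hc0 : 0 < c := by rw [hc]; exact dist_pos.2 hAB
  have hbc : b + c ≠ 0 := by positivity
  have hab : a + b ≠ 0 := by positivity
  have hac' : a - c ≠ 0 := sub_ne_zero.2 hac
  rw [Set.insert_comm]
  apply collinear_insert_of_mem_affineSpan_pair
  have key : (a / (a - c)) • A - (c / (a - c)) • C =
      AffineMap.lineMap ((b / (b + c)) • B + (c / (b + c)) • C)
        ((a / (a + b)) • A + (b / (a + b)) • B) ((a + b) / (a - c)) := by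
    rw [AffineMap.lineMap_apply_module]
    match_scalars <;> field_simp <;> ring
  rw [key]
  exact AffineMap.lineMap_mem_affineSpan_pair _ _ _
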